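/- Let Δ be the probability simplex in ℝ^m, let X be a nonempty compact convex subset of Δ, let y = (y_1,…,y_m) be a coordinatewise nonpositive vector, and let x^k ∈ X have all coordinates strictly positive. Define the two-step mirror-descent update: x^{k+1/2} = argmax_{x∈Δ} {⟨y, x⟩ − D_KL(x, x^k)} and x^{k+1} = argmin_{x∈X} D_KL(x, x^{k+1/2}), where D_KL(x,y) = Σ_r x_r log(x_r/y_r) is the Kullback–Leibler divergence (valued in [0,∞]). Then for every z ∈ X: D_KL(z, x^{k+1}) − D_KL(z, x^k) ≤ ⟨y, x^k − z⟩ + (1/2)⟨y², x^k⟩, where y² = (y_1²,…,y_m²). -/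

import Mathlib

open scoped BigOperators Classical
open Finset

noncomputable section

/-- Kullback–Leibler divergence, real-valued formula (valid when `y` has positive
coordinates, with the convention `0 · log(0/y_r) = 0`). -/
def klR {m : ℕ} (x y : Fin m → ℝ) : ℝ := ∑ r, x r * Real.log (x r / y r)

/-- Kullback–Leibler divergence valued in `[0,∞]` (as `EReal`), with the conventions
`0 · log(0/y_r) = 0` and `x_r · log(x_r/0) = +∞` for `x_r > 0`. -/
def klE {m : ℕ} (x y : Fin m → ℝ) : EReal :=
  ∑ r, if x r = 0 then (0 : EReal)
    else if y r ≤ 0 then (⊤ : EReal)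
    else ((x r * Real.log (x r / y r) : ℝ) : EReal)

lemma aux_coe_sum {ι : Type*} (s : Finset ι) (f : ι → ℝ) :
    ((∑ i ∈ s, f i : ℝ) : EReal) = ∑ i ∈ s, ((f i : ℝ) : EReal) :=
  map_sum (⟨⟨Real.toEReal, EReal.coe_zero⟩, EReal.coe_add⟩ : ℝ →+ EReal) f s

lemma sub_le_mul_log' {p t : ℝ} (hp : 0 < p) (ht : 0 ≤ t) :
    t - p ≤ t * Real.log (t / p) := by
  rcases ht.eq_or_lt with h | h
  · simp [← h]; linarith
  · have h1 : Real.log (p / t) ≤ p / t - 1 := Real.log_le_sub_one_of_pos (by positivity)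
    have h2 : Real.log (t / p) = - Real.log (p / t) := by
      rw [← Real.log_inv]; congr 1; field_simp
    have h3 : t * (p / t) = p := by field_simp
    rw [h2]
    nlinarith [mul_le_mul_of_nonneg_left h1 h.le]

lemma sub_lt_mul_log' {p t : ℝ} (hp : 0 < p) (ht : 0 ≤ t) (hne : t ≠ p) :
    t - p < t * Real.log (t / p) := by
  rcases ht.eq_or_lt with h | h
  · simp [← h]; linarith [hp]
  · have hne1 : p / t ≠ 1 := by
      intro hc; apply hne; field_simp at hc; linarith
    have h1 : Real.log (p / t) < p / t - 1 := Real.log_lt_sub_one_of_pos (by positivity) hne1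
    have h2 : Real.log (t / p) = - Real.log (p / t) := by
      rw [← Real.log_inv]; congr 1; field_simp
    have h3 : t * (p / t) = p := by field_simp
    rw [h2]
    nlinarith [mul_lt_mul_of_pos_left h1 h]

lemma tangent' {h v u : ℝ} (hh : 0 < h) (hv : 0 < v) (hu : 0 ≤ u) :
    v * Real.log (v / h) + (Real.log (v / h) + 1) * (u - v) ≤ u * Real.log (u / h) := by
  have key := sub_le_mul_log' hv hu
  rcases hu.eq_or_lt with h0 | h0
  · simp [← h0]; nlinarith
  · have e : Real.log (u / h) = Real.log (u / v) + Real.log (v / h) := by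
      rw [← Real.log_mul (by positivity) (by positivity)]
      congr 1; field_simp
    rw [e]; nlinarith

lemma secant' {h u v t : ℝ} (hh : 0 < h) (hu : 0 ≤ u) (hv : 0 ≤ v) (ht0 : 0 ≤ t) (ht1 : t ≤ 1) :
    ((1-t)*u + t*v) * Real.log (((1-t)*u + t*v) / h) ≤
      (1-t) * (u * Real.log (u/h)) + t * (v * Real.log (v/h)) := by
  set w := (1-t)*u + t*v with hw
  have hw0 : 0 ≤ w := add_nonneg (mul_nonneg (by linarith) hu) (mul_nonneg ht0 hv)
  rcases hw0.eq_or_lt with h0 | h0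
  · have hu' : (1-t)*u = 0 := by nlinarith [mul_nonneg (by linarith : (0:ℝ) ≤ 1-t) hu, mul_nonneg ht0 hv]
    have hv' : t*v = 0 := by nlinarith [mul_nonneg (by linarith : (0:ℝ) ≤ 1-t) hu, mul_nonneg ht0 hv]
    rw [← h0]
    have e1 : (1-t) * (u * Real.log (u/h)) = 0 := by
      rcases mul_eq_zero.mp hu' with h' | h' <;> simp [h']
    have e2 : t * (v * Real.log (v/h)) = 0 := by
      rcases mul_eq_zero.mp hv' with h' | h' <;> simp [h']
    simp [e1, e2]
  · have t1 := tangent' hh h0 hu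
    have t2 := tangent' hh h0 hv
    nlinarith [mul_le_mul_of_nonneg_left t1 (by linarith : (0:ℝ) ≤ 1-t),
      mul_le_mul_of_nonneg_left t2 ht0]

lemma exp_le_quad {t : ℝ} (ht : t ≤ 0) : Real.exp t ≤ 1 + t + t^2/2 := by
  have h1 : 1 + (-t) + (-t)^2/2 ≤ Real.exp (-t) := by
    have h := Real.sum_le_exp_of_nonneg (neg_nonneg.mpr ht) 3
    simp [Finset.sum_range_succ, Nat.factorial] at h
    nlinarith [h]
  have h2 : Real.exp t * Real.exp (-t) = 1 := by rw [← Real.exp_add]; simp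
  have h3 : (0:ℝ) < Real.exp t := Real.exp_pos t
  have h4 : (0:ℝ) < 1 - t + t^2/2 := by nlinarith [sq_nonneg (t-1)]
  nlinarith [mul_le_mul_of_nonneg_left h1 h3.le, sq_nonneg (t^2), sq_nonneg t]

lemma klE_eq_klR {m : ℕ} {x q : Fin m → ℝ} (hx : ∀ r, 0 ≤ x r) (hq : ∀ r, 0 < x r → 0 < q r) :
    klE x q = ((klR x q : ℝ) : EReal) := by
  unfold klE klR
  rw [aux_coe_sum]
  refine Finset.sum_congr rfl fun r _ => ?_
  by_cases h : x r = 0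
  · simp [h]
  · rw [if_neg h, if_neg (not_le.mpr (hq r ((hx r).lt_of_ne (Ne.symm h))))]

lemma ratio_bound {w u t d : ℝ} (hw : 0 < w) (hu : 0 < u) (hue : u = w + t * d)
    (ht0 : 0 < t) (hu_ge : w / 2 ≤ u) :
    d * Real.log (u / w) ≤ t * (2 * d ^ 2 / w) := by
  have hL1 : Real.log (u / w) ≤ t * d / w := by
    have h := Real.log_le_sub_one_of_pos (div_pos hu hw)
    have e : u / w - 1 = t * d / w := by
      rw [hue]; field_simp; ring
    linarith
  have hL2 : t * d / u ≤ Real.log (u / w) := by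
    have h := Real.log_le_sub_one_of_pos (div_pos hw hu)
    have e : Real.log (u / w) = - Real.log (w / u) := by
      rw [← Real.log_inv]; congr 1; field_simp
    have e2 : w / u - 1 = -(t * d) / u := by
      field_simp; linarith [hue]
    rw [e]; rw [e2] at h
    have : -(t*d)/u = -(t*d/u) := by ring
    rw [this] at h; linarith
  rcases le_total d 0 with hd | hd
  · have h1 : d * Real.log (u / w) ≤ d * (t * d / u) := mul_le_mul_of_nonpos_left hL2 hd
    have h2 : d * (t * d / u) ≤ t * (2 * d ^ 2 / w) := by
      have e3 : d * (t * d / u) = t * d ^ 2 / u := by ring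
      have e4 : t * (2 * d ^ 2 / w) = 2 * t * d ^ 2 / w := by ring
      rw [e3, e4, div_le_div_iff₀ hu hw]
      nlinarith [mul_nonneg ht0.le (sq_nonneg d), hu_ge]
    linarith
  · have h1 : d * Real.log (u / w) ≤ d * (t * d / w) := mul_le_mul_of_nonneg_left hL1 hd
    have h2 : d * (t * d / w) ≤ t * (2 * d ^ 2 / w) := by
      have e3 : d * (t * d / w) = t * d ^ 2 / w := by ring
      have e4 : t * (2 * d ^ 2 / w) = 2 * t * d ^ 2 / w := by ring
      rw [e3, e4, div_le_div_iff₀ hw hw]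
      nlinarith [mul_nonneg ht0.le (sq_nonneg d), hw]
    linarith


set_option maxHeartbeats 1000000 in
/-- the two-step KL mirror-descent update satisfies
`D_KL(z, x^{k+1}) − D_KL(z, x^k) ≤ ⟨y, x^k − z⟩ + ½⟨y², x^k⟩` for every `z ∈ X`. -/
theorem kl_two_step_mirror_descent_bound
    {m : ℕ}
    -- the probability simplex in ℝ^m
    (Δ : Set (Fin m → ℝ))
    (hΔ : Δ = {x | (∀ r, 0 ≤ x r) ∧ ∑ r, x r = 1})
    (X : Set (Fin m → ℝ))
    (hXsub : X ⊆ Δ) (hXne : X.Nonempty) (hXcpt : IsCompact X) (hXcvx : Convex ℝ X)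
    -- y is coordinatewise nonpositive
    (y : Fin m → ℝ) (hy : ∀ r, y r ≤ 0)
    -- current iterate: in X, strictly positive coordinates
    (xk : Fin m → ℝ) (hxkX : xk ∈ X) (hxkpos : ∀ r, 0 < xk r)
    -- first step: xhalf = argmax over Δ of ⟨y,x⟩ − D_KL(x, x^k)
    (xhalf : Fin m → ℝ) (hxhalfΔ : xhalf ∈ Δ)
    (hxhalf : ∀ x ∈ Δ, (∑ r, y r * x r) - klR x xk ≤ (∑ r, y r * xhalf r) - klR xhalf xk)
    -- second step: xnext = argmin over X of D_KL(x, xhalf)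
    (xnext : Fin m → ℝ) (hxnextX : xnext ∈ X)
    (hxnext : ∀ x ∈ X, klE xnext xhalf ≤ klE x xhalf) :
    ∀ z ∈ X,
      klE z xnext ≤ klE z xk +
        (((∑ r, y r * (xk r - z r)) + (1 / 2) * ∑ r, (y r) ^ 2 * xk r : ℝ) : EReal) := by
  have hΔmem : ∀ u ∈ Δ, (∀ r, 0 ≤ u r) ∧ ∑ r, u r = 1 := by
    intro u hu; rw [hΔ] at hu; exact hu
  obtain ⟨hw0, hw1⟩ := hΔmem xnext (hXsub hxnextX)
  obtain ⟨hk0, hk1⟩ := hΔmem xk (hXsub hxkX)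
  obtain ⟨hh0, hh1⟩ := hΔmem xhalf hxhalfΔ
  have huniv : (univ : Finset (Fin m)).Nonempty := by
    by_contra hempty
    rw [not_nonempty_iff_eq_empty] at hempty
    rw [hempty] at hk1; simp at hk1
  set Z : ℝ := ∑ r, xk r * Real.exp (y r) with hZdef
  have hZpos : 0 < Z := Finset.sum_pos (fun r _ => mul_pos (hxkpos r) (Real.exp_pos _)) huniv
  set p : Fin m → ℝ := fun r => xk r * Real.exp (y r) / Z with hpdef
  have hppos : ∀ r, 0 < p r := fun r =>
    div_pos (mul_pos (hxkpos r) (Real.exp_pos _)) hZpos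
  have hp1 : ∑ r, p r = 1 := by
    show (∑ r, xk r * Real.exp (y r) / Z) = 1
    rw [← Finset.sum_div, div_self hZpos.ne']
  have hpΔ : p ∈ Δ := by rw [hΔ]; exact ⟨fun r => (hppos r).le, hp1⟩
  -- objective identity
  have hobj : ∀ u : Fin m → ℝ, (∀ r, 0 ≤ u r) → ∑ r, u r = 1 →
      (∑ r, y r * u r) - klR u xk = Real.log Z - klR u p := by
    intro u hu0 hu1
    have key : ∀ r, y r * u r - u r * Real.log (u r / xk r)
        = u r * Real.log Z - u r * Real.log (u r / p r) := by
      intro r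
      rcases (hu0 r).eq_or_lt with h0 | h0
      · simp [← h0]
      · have hk := hxkpos r
        have hpr := hppos r
        have e1 : Real.log (u r / xk r) = Real.log (u r) - Real.log (xk r) :=
          Real.log_div h0.ne' hk.ne'
        have e2 : Real.log (u r / p r) = Real.log (u r) - Real.log (p r) :=
          Real.log_div h0.ne' hpr.ne'
        have e3 : Real.log (p r) = Real.log (xk r) + y r - Real.log Z := by
          show Real.log (xk r * Real.exp (y r) / Z) = _
          rw [Real.log_div (mul_pos hk (Real.exp_pos _)).ne' hZpos.ne',
            Real.log_mul hk.ne' (Real.exp_ne_zero _), Real.log_exp]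
        rw [e1, e2, e3]; ring
    calc (∑ r, y r * u r) - klR u xk
        = ∑ r, (y r * u r - u r * Real.log (u r / xk r)) := by
          rw [klR, ← Finset.sum_sub_distrib]
      _ = ∑ r, (u r * Real.log Z - u r * Real.log (u r / p r)) :=
          Finset.sum_congr rfl fun r _ => key r
      _ = (∑ r, u r) * Real.log Z - klR u p := by
          rw [klR, Finset.sum_sub_distrib, ← Finset.sum_mul]
      _ = Real.log Z - klR u p := by rw [hu1, one_mul]
  have hkpp : klR p p = 0 := by
    rw [klR]
    exact Finset.sum_eq_zero fun r _ => by
      rw [div_self (hppos r).ne', Real.log_one, mul_zero]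
  -- xhalf = p
  have hxp : xhalf = p := by
    have h1 := hxhalf p hpΔ
    rw [hobj p (fun r => (hppos r).le) hp1, hobj xhalf hh0 hh1, hkpp] at h1
    have h2 : klR xhalf p ≤ 0 := by linarith
    have hsum0 : ∑ r, (xhalf r - p r) = 0 := by
      rw [Finset.sum_sub_distrib, hh1, hp1]; ring
    have h3 : ∑ r, (xhalf r * Real.log (xhalf r / p r) - (xhalf r - p r)) ≤ 0 := by
      rw [Finset.sum_sub_distrib, hsum0, sub_zero]; exact h2
    funext r
    by_contra hne
    have hsumpos : 0 < ∑ r, (xhalf r * Real.log (xhalf r / p r) - (xhalf r - p r)) := by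
      refine Finset.sum_pos' (fun s _ => ?_) ⟨r, Finset.mem_univ r, ?_⟩
      · linarith [sub_le_mul_log' (hppos s) (hh0 s)]
      · linarith [sub_lt_mul_log' (hppos r) (hh0 r) hne]
    linarith
  have hhpos : ∀ r, 0 < xhalf r := by intro r; rw [hxp]; exact hppos r
  -- minimality in real form
  have hmin : ∀ x ∈ X, klR xnext xhalf ≤ klR x xhalf := by
    intro x hx
    have h := hxnext x hx
    rw [klE_eq_klR hw0 (fun r _ => hhpos r),
      klE_eq_klR (hΔmem x (hXsub hx)).1 (fun r _ => hhpos r)] at h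
    exact_mod_cast h
  intro z hzX
  obtain ⟨hz0, hz1⟩ := hΔmem z (hXsub hzX)
  -- Step 2: support
  have hsupp : ∀ r, 0 < z r → 0 < xnext r := by
    intro r hvr
    rcases (hw0 r).eq_or_lt with h0 | h0
    swap
    · exact h0
    exfalso
    set C : ℝ := ∑ s ∈ univ.erase r,
      (z s * Real.log (z s / xhalf s) - xnext s * Real.log (xnext s / xhalf s)) with hCdef
    set A : ℝ := z r * Real.log (z r / xhalf r) + C with hAdef
    set t : ℝ := min (1/2) (Real.exp ((-A - 1) / z r)) with htdef
    have ht0 : 0 < t := lt_min (by norm_num) (Real.exp_pos _)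
    have ht1 : t < 1 := lt_of_le_of_lt (min_le_left _ _) (by norm_num)
    set u : Fin m → ℝ := fun s => (1 - t) * xnext s + t * z s with hudef
    have huX : u ∈ X := by
      have h := hXcvx hxnextX hzX (by linarith : (0:ℝ) ≤ 1 - t) ht0.le (by ring)
      have e : u = (1 - t) • xnext + t • z := by
        funext s; simp [hudef, smul_eq_mul]
      rw [e]; exact h
    have hur : u r = t * z r := by simp [hudef, ← h0]
    have hle := hmin u huX
    -- split sums
    have hsplit1 : klR u xhalf = u r * Real.log (u r / xhalf r) +
        ∑ s ∈ univ.erase r, u s * Real.log (u s / xhalf s) := by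
      rw [klR, ← Finset.add_sum_erase _ _ (Finset.mem_univ r)]
    have hsplit2 : klR xnext xhalf =
        ∑ s ∈ univ.erase r, xnext s * Real.log (xnext s / xhalf s) := by
      rw [klR, ← Finset.add_sum_erase _ _ (Finset.mem_univ r), ← h0]
      simp
    have hbound : ∑ s ∈ univ.erase r, u s * Real.log (u s / xhalf s) ≤
        ∑ s ∈ univ.erase r, ((1-t) * (xnext s * Real.log (xnext s / xhalf s)) +
          t * (z s * Real.log (z s / xhalf s))) :=
      Finset.sum_le_sum fun s _ => secant' (hhpos s) (hw0 s) (hz0 s) ht0.le ht1.le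
    have hbig : 0 ≤ u r * Real.log (u r / xhalf r) + t * C := by
      have e : ∑ s ∈ univ.erase r, ((1-t) * (xnext s * Real.log (xnext s / xhalf s)) +
          t * (z s * Real.log (z s / xhalf s)))
          = (∑ s ∈ univ.erase r, xnext s * Real.log (xnext s / xhalf s)) + t * C := by
        rw [hCdef, Finset.mul_sum, ← Finset.sum_add_distrib]
        exact Finset.sum_congr rfl fun s _ => by ring
      have h6 := hbound.trans_eq e
      linarith [hle, hsplit1, hsplit2, h6]
    -- now derive contradiction
    have hlogu : Real.log (u r / xhalf r) = Real.log t + Real.log (z r / xhalf r) := by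
      rw [hur, show t * z r / xhalf r = t * (z r / xhalf r) by ring,
        Real.log_mul ht0.ne' (div_pos hvr (hhpos r)).ne']
    have hlt : Real.log t ≤ (-A - 1) / z r := by
      calc Real.log t ≤ Real.log (Real.exp ((-A - 1) / z r)) :=
            Real.log_le_log ht0 (min_le_right _ _)
        _ = (-A - 1) / z r := Real.log_exp _
    have hcontra : 0 ≤ t * (z r * Real.log t + A) := by
      have : u r * Real.log (u r / xhalf r) + t * C
          = t * (z r * Real.log t + A) := by
        rw [hlogu, hur]
        show _ = t * (z r * Real.log t + (z r * Real.log (z r / xhalf r) + C))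
        ring
      linarith [this ▸ hbig]
    have h5 : z r * Real.log t + A ≤ -1 := by
      have := mul_le_mul_of_nonneg_left hlt hvr.le
      rw [mul_div_cancel₀ _ hvr.ne'] at this
      linarith
    nlinarith [hcontra, h5, ht0]
  -- Step 3: first-order optimality at xnext
  have hS : 0 ≤ ∑ s, (z s - xnext s) * Real.log (xnext s / xhalf s) := by
    set S : ℝ := ∑ s, (z s - xnext s) * Real.log (xnext s / xhalf s) with hSdef
    set K : ℝ := ∑ s, 2 * (z s - xnext s) ^ 2 / xnext s with hKdef
    have hK0 : 0 ≤ K := Finset.sum_nonneg fun s _ => div_nonneg (by positivity) (hw0 s)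
    have hz0' : ∀ s, xnext s = 0 → z s = 0 := by
      intro s h
      rcases (hz0 s).eq_or_lt with h' | h'
      · exact h'.symm
      · exact absurd (hsupp s h') (by rw [h]; exact lt_irrefl 0)
    have key : ∀ t : ℝ, 0 < t → t ≤ 1/2 → 0 ≤ S + t * K := by
      intro t ht0 ht2
      have ht1 : t < 1 := by linarith
      set u : Fin m → ℝ := fun s => (1 - t) * xnext s + t * z s with hudef
      have huX : u ∈ X := by
        have h := hXcvx hxnextX hzX (by linarith : (0:ℝ) ≤ 1 - t) ht0.le (by ring)
        have e : u = (1 - t) • xnext + t • z := by funext s; simp [hudef, smul_eq_mul]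
        rw [e]; exact h
      have hle := hmin u huX
      have hupos : ∀ s, 0 < xnext s → 0 < u s := by
        intro s hws
        have h2 : 0 ≤ t * z s := mul_nonneg ht0.le (hz0 s)
        have h3 : 0 < (1 - t) * xnext s := mul_pos (by linarith) hws
        show 0 < (1 - t) * xnext s + t * z s
        linarith
      have hue : ∀ s, u s = xnext s + t * (z s - xnext s) := by
        intro s; show (1 - t) * xnext s + t * z s = _; ring
      have step1 : klR u xhalf - klR xnext xhalf
          ≤ t * ∑ s, (z s - xnext s) * (Real.log (u s / xhalf s) + 1) := by
        rw [klR, klR, ← Finset.sum_sub_distrib, Finset.mul_sum]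
        refine Finset.sum_le_sum fun s _ => ?_
        by_cases hws : xnext s = 0
        · have hzs : z s = 0 := hz0' s hws
          have hus : u s = 0 := by rw [hue s, hws, hzs]; ring
          rw [hus, hws, hzs]; simp
        · have hw : 0 < xnext s := (hw0 s).lt_of_ne (Ne.symm hws)
          have hus : 0 < u s := hupos s hw
          have htan := tangent' (hhpos s) hus (hw0 s)
          have he : xnext s - u s = -(t * (z s - xnext s)) := by rw [hue s]; ring
          nlinarith [htan]
      have hdsum : ∑ s, (z s - xnext s) = 0 := by
        rw [Finset.sum_sub_distrib, hz1, hw1]; norm_num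
      have step2 : ∑ s, (z s - xnext s) * (Real.log (u s / xhalf s) + 1)
          = ∑ s, (z s - xnext s) * Real.log (u s / xhalf s) := by
        simp only [mul_add, mul_one]
        rw [Finset.sum_add_distrib, hdsum, add_zero]
      have step3 : ∀ s, (z s - xnext s) * Real.log (u s / xhalf s)
          ≤ (z s - xnext s) * Real.log (xnext s / xhalf s)
            + t * (2 * (z s - xnext s) ^ 2 / xnext s) := by
        intro s
        by_cases hws : xnext s = 0
        · have hzs : z s = 0 := hz0' s hws
          rw [hws, hzs]; simp
        · have hw : 0 < xnext s := (hw0 s).lt_of_ne (Ne.symm hws)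
          have hus : 0 < u s := hupos s hw
          have hu_ge : xnext s / 2 ≤ u s := by
            have hzs := hz0 s
            have h4 : 0 ≤ t * z s := mul_nonneg ht0.le hzs
            show xnext s / 2 ≤ (1 - t) * xnext s + t * z s
            nlinarith
          have hrb := ratio_bound hw hus (hue s) ht0 hu_ge
          have hlogd : Real.log (u s / xhalf s)
              = Real.log (u s / xnext s) + Real.log (xnext s / xhalf s) := by
            rw [← Real.log_mul (div_pos hus hw).ne' (div_pos hw (hhpos s)).ne']
            congr 1; field_simp
          rw [hlogd]; nlinarith [hrb]
      have hsum3 : ∑ s, (z s - xnext s) * Real.log (u s / xhalf s) ≤ S + t * K := by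
        rw [hSdef, hKdef, Finset.mul_sum, ← Finset.sum_add_distrib]
        exact Finset.sum_le_sum fun s _ => step3 s
      have hchain : 0 ≤ t * (S + t * K) := by
        calc (0:ℝ) ≤ klR u xhalf - klR xnext xhalf := by linarith [hle]
          _ ≤ t * ∑ s, (z s - xnext s) * (Real.log (u s / xhalf s) + 1) := step1
          _ = t * ∑ s, (z s - xnext s) * Real.log (u s / xhalf s) := by rw [step2]
          _ ≤ t * (S + t * K) := mul_le_mul_of_nonneg_left hsum3 ht0.le
      nlinarith [hchain, ht0]
    by_contra hneg
    push_neg at hneg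
    have hK1 : (0:ℝ) < K + 1 := by linarith
    set t : ℝ := min (1/2) (-S / (K + 1)) with htdef
    have htpos : 0 < t := lt_min (by norm_num) (div_pos (by linarith) hK1)
    have ht2 : t ≤ 1/2 := min_le_left _ _
    have h := key t htpos ht2
    have htle : t * (K + 1) ≤ -S := by
      have h5 := min_le_right (1/2 : ℝ) (-S / (K + 1))
      calc t * (K+1) ≤ (-S/(K+1)) * (K+1) := mul_le_mul_of_nonneg_right h5 (by linarith)
        _ = -S := by field_simp
    have hexp : t * (K + 1) = t * K + t := by ring
    linarith [h, htle, hexp, htpos]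
  -- Gibbs: klR xnext xhalf ≥ 0
  have hwh : 0 ≤ klR xnext xhalf := by
    have h := Finset.sum_le_sum (s := (univ : Finset (Fin m)))
      (f := fun s => xnext s - xhalf s)
      (g := fun s => xnext s * Real.log (xnext s / xhalf s))
      (fun s _ => sub_le_mul_log' (hhpos s) (hw0 s))
    rw [Finset.sum_sub_distrib, hw1, hh1] at h
    rw [klR]; linarith
  -- generalized Pythagorean inequality (weak form)
  have hzw : klR z xnext ≤ klR z xhalf := by
    have hdiff : klR z xhalf - klR z xnext
        = (∑ s, (z s - xnext s) * Real.log (xnext s / xhalf s)) + klR xnext xhalf := by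
      rw [klR, klR, klR, ← Finset.sum_sub_distrib, ← Finset.sum_add_distrib]
      refine Finset.sum_congr rfl fun s _ => ?_
      rcases (hz0 s).eq_or_lt with h0 | h0
      · rw [← h0]; ring
      · have hw := hsupp s h0
        rw [Real.log_div h0.ne' (hhpos s).ne', Real.log_div h0.ne' hw.ne',
          Real.log_div hw.ne' (hhpos s).ne']
        ring
    linarith [hS, hwh]
  -- value of klR z xhalf
  have hzh : klR z xhalf = klR z xk - (∑ r, y r * z r) + Real.log Z := by
    have h := hobj z hz0 hz1
    rw [← hxp] at h
    linarith
  -- bound on log Z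
  have hlogZ : Real.log Z ≤ (∑ r, y r * xk r) + (1/2) * ∑ r, (y r)^2 * xk r := by
    have hZle : Z ≤ 1 + ((∑ r, y r * xk r) + (1/2) * ∑ r, (y r)^2 * xk r) := by
      have h1 : ∀ r, xk r * Real.exp (y r) ≤ xk r * (1 + y r + (y r)^2/2) :=
        fun r => mul_le_mul_of_nonneg_left (exp_le_quad (hy r)) (hk0 r)
      calc Z ≤ ∑ r, xk r * (1 + y r + (y r)^2/2) := Finset.sum_le_sum fun r _ => h1 r
        _ = (∑ r, xk r) + ((∑ r, y r * xk r) + (1/2) * ∑ r, (y r)^2 * xk r) := by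
            have e : ∀ r, xk r * (1 + y r + (y r)^2/2)
                = xk r + (y r * xk r + (1/2) * ((y r)^2 * xk r)) := fun r => by ring
            rw [Finset.sum_congr rfl (fun r _ => e r), Finset.sum_add_distrib,
              Finset.sum_add_distrib, ← Finset.mul_sum]
        _ = 1 + ((∑ r, y r * xk r) + (1/2) * ∑ r, (y r)^2 * xk r) := by rw [hk1]
    have hB := Real.add_one_le_exp ((∑ r, y r * xk r) + (1/2) * ∑ r, (y r)^2 * xk r)
    have h2 : Z ≤ Real.exp ((∑ r, y r * xk r) + (1/2) * ∑ r, (y r)^2 * xk r) := by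
      linarith
    calc Real.log Z ≤ Real.log (Real.exp ((∑ r, y r * xk r) + (1/2) * ∑ r, (y r)^2 * xk r)) :=
          Real.log_le_log hZpos h2
      _ = _ := Real.log_exp _
  have hsplitY : ∑ r, y r * (xk r - z r) = (∑ r, y r * xk r) - (∑ r, y r * z r) := by
    rw [← Finset.sum_sub_distrib]
    exact Finset.sum_congr rfl fun r _ => by ring
  have hfinal : klR z xnext ≤ klR z xk +
      ((∑ r, y r * (xk r - z r)) + (1/2) * ∑ r, (y r)^2 * xk r) := by
    linarith [hzw, hzh, hlogZ, hsplitY]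
  rw [klE_eq_klR hz0 hsupp, klE_eq_klR hz0 (fun r _ => hxkpos r), ← EReal.coe_add]
  exact_mod_cast hfinal
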